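/- (Arhangel'skii–Shapirovskii) For any Hausdorff space X, |X| ≤ 2^{ψ(X)·t(X)·L(X)}. -/

import Mathlib

open Cardinal Set

universe u

/-- Every open cover (by opens of `X`) of the subset `Y` has a subcover of size `≤ κ`. -/
def LindelofLE {X : Type u} [TopologicalSpace X] (Y : Set X) (κ : Cardinal.{u}) : Prop :=
  ∀ U : Set (Set X), (∀ u ∈ U, IsOpen u) → Y ⊆ ⋃₀ U →
    ∃ V ⊆ U, #V ≤ κ ∧ Y ⊆ ⋃₀ V

/-- The tightness of `X` is at most `κ`. -/
def TightnessLE (X : Type u) [TopologicalSpace X] (κ : Cardinal.{u}) : Prop :=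
  ∀ (A : Set X) (x : X), x ∈ closure A → ∃ B ⊆ A, #B ≤ κ ∧ x ∈ closure B

lemma aux_lin_closed {X : Type u} [TopologicalSpace X] {κ : Cardinal.{u}}
    (hL : LindelofLE (Set.univ : Set X) κ) {F : Set X} (hF : IsOpen Fᶜ) : LindelofLE F κ := by
  intro U hU hcov
  obtain ⟨V, hVU, hVk, hVcov⟩ := hL (insert Fᶜ U)
    (by rintro u (rfl | hu); exacts [hF, hU u hu])
    (by intro z _
        by_cases hz : z ∈ F
        · obtain ⟨v, hv, hzv⟩ := hcov hz
          exact ⟨v, Or.inr hv, hzv⟩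
        · exact ⟨Fᶜ, Or.inl rfl, hz⟩)
  refine ⟨V \ {Fᶜ}, ?_, ?_, ?_⟩
  · intro v ⟨hv, hne⟩
    rcases hVU hv with h | h
    · exact absurd h hne
    · exact h
  · exact (mk_le_mk_of_subset (diff_subset)).trans hVk
  · intro z hz
    obtain ⟨v, hv, hzv⟩ := hVcov (mem_univ z)
    refine ⟨v, ⟨hv, ?_⟩, hzv⟩
    rintro rfl
    exact hzv hz

lemma aux_psic {X : Type u} [TopologicalSpace X] [T2Space X] {κ : Cardinal.{u}}
    (hκ : ℵ₀ ≤ κ)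
    (hψ : ∀ x : X, ∃ U : Set (Set X), (∀ u ∈ U, IsOpen u) ∧ #U ≤ κ ∧ ⋂₀ U = {x})
    (hL : LindelofLE (Set.univ : Set X) κ) (x : X) :
    ∃ W : Set (Set X), (∀ w ∈ W, IsOpen w ∧ x ∈ w) ∧ #W ≤ κ ∧ (⋂ w ∈ W, closure w) = {x} := by
  obtain ⟨U, hUo, hUk, hUx⟩ := hψ x
  have hxU : ∀ u ∈ U, x ∈ u := by
    intro u hu
    have : x ∈ ⋂₀ U := hUx ▸ rfl
    exact this u hu
  -- separation functions
  have hsep : ∀ y : X, ∃ p : Set X × Set X, y ≠ x →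
      IsOpen p.1 ∧ IsOpen p.2 ∧ x ∈ p.1 ∧ y ∈ p.2 ∧ Disjoint p.1 p.2 := by
    intro y
    by_cases hy : y ≠ x
    · obtain ⟨a, b, ha, hb, hxa, hyb, hab⟩ := t2_separation (Ne.symm hy)
      exact ⟨(a, b), fun _ => ⟨ha, hb, hxa, hyb, hab⟩⟩
    · exact ⟨(∅, ∅), fun h => absurd h hy⟩
  choose P hP using hsep
  -- for each u ∈ U, a κ-family of closed nbhd whose closures intersect inside u
  have key : ∀ u : U, ∃ Wu : Set (Set X), #Wu ≤ κ ∧ (∀ w ∈ Wu, IsOpen w ∧ x ∈ w) ∧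
      (⋂ w ∈ Wu, closure w) ⊆ (u : Set X) := by
    rintro ⟨u, hu⟩
    have hux : x ∈ u := hxU u hu
    have hne : ∀ y ∈ uᶜ, y ≠ x := fun y hy h => hy (h ▸ hux)
    obtain ⟨V, hVsub, hVk, hVcov⟩ := aux_lin_closed hL (F := uᶜ)
      (by rw [compl_compl]; exact hUo u hu) ((fun y : X => (P y).2) '' uᶜ)
      (by rintro v ⟨y, hy, rfl⟩; exact (hP y (hne y hy)).2.1)
      (by intro y hy; exact ⟨(P y).2, ⟨y, hy, rfl⟩, (hP y (hne y hy)).2.2.2.1⟩)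
    have hV : ∀ v : V, ∃ y, y ∈ uᶜ ∧ (P y).2 = (v : Set X) := by
      rintro ⟨v, hv⟩; obtain ⟨y, hy, hvy⟩ := hVsub hv; exact ⟨y, hy, hvy⟩
    choose g hg1 hg2 using hV
    refine ⟨range (fun v : V => (P (g v)).1), ?_, ?_, ?_⟩
    · exact mk_range_le.trans hVk
    · rintro w ⟨v, rfl⟩
      exact ⟨(hP (g v) (hne _ (hg1 v))).1, (hP (g v) (hne _ (hg1 v))).2.2.1⟩
    · intro z hz
      by_contra hzu
      obtain ⟨v, hv, hzv⟩ := hVcov hzu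
      have hz1 : z ∈ closure (P (g ⟨v, hv⟩)).1 := by
        have := mem_iInter₂.1 hz (P (g ⟨v, hv⟩)).1 ⟨⟨v, hv⟩, rfl⟩
        exact this
      have hdisj := (hP (g ⟨v, hv⟩) (hne _ (hg1 ⟨v, hv⟩))).2.2.2.2
      have hop := (hP (g ⟨v, hv⟩) (hne _ (hg1 ⟨v, hv⟩))).2.1
      have hsubs : (P (g ⟨v, hv⟩)).1 ⊆ ((P (g ⟨v, hv⟩)).2)ᶜ :=
        fun a ha hb => disjoint_left.1 hdisj ha hb
      have hsubc : closure (P (g ⟨v, hv⟩)).1 ⊆ ((P (g ⟨v, hv⟩)).2)ᶜ :=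
        closure_minimal hsubs hop.isClosed_compl
      have : z ∈ (P (g ⟨v, hv⟩)).2 := by rw [hg2 ⟨v, hv⟩]; exact hzv
      exact hsubc hz1 this
  choose Wfn hk hprop hsub using key
  refine ⟨⋃ u : U, Wfn u, ?_, ?_, ?_⟩
  · rintro w hw
    obtain ⟨u, hu⟩ := mem_iUnion.1 hw
    exact hprop u w hu
  · calc #(⋃ u : U, Wfn u) ≤ #U * ⨆ u : U, #(Wfn u) := mk_iUnion_le _
      _ ≤ κ * κ := by
          rcases isEmpty_or_nonempty U with h | h
          · simp [mk_eq_zero]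
          · exact mul_le_mul' hUk (ciSup_le' hk)
      _ = κ := mul_eq_self hκ
  · apply Subset.antisymm
    · intro z hz
      have : z ∈ ⋂₀ U := by
        intro u hu
        apply hsub ⟨u, hu⟩
        refine mem_iInter₂.2 fun w hw => ?_
        have hwS : w ∈ ⋃ u : U, Wfn u := mem_iUnion.2 ⟨⟨u, hu⟩, hw⟩
        exact mem_iInter₂.1 hz w hwS
      rwa [hUx] at this
    · rintro z (rfl : z = x)
      apply mem_iInter₂.2
      intro w hw
      obtain ⟨u, hu⟩ := mem_iUnion.1 hw
      exact subset_closure (hprop u w hu).2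

lemma aux_pow_le {κ c : Cardinal.{u}} (hκ : ℵ₀ ≤ κ) (hc : c ≤ 2 ^ κ) :
    max c ℵ₀ ^ κ ≤ 2 ^ κ := by
  calc max c ℵ₀ ^ κ ≤ (2 ^ κ) ^ κ := by
        apply power_le_power_right
        exact max_le hc (hκ.trans (le_trans (le_of_lt (cantor κ)) le_rfl))
    _ = 2 ^ (κ * κ) := (power_mul ..).symm
    _ = 2 ^ κ := by rw [mul_eq_self hκ]

lemma aux_closure_card {X : Type u} [TopologicalSpace X] {κ : Cardinal.{u}}
    (hκ : ℵ₀ ≤ κ) (ht : TightnessLE X κ)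
    (Wfam : X → Set (Set X))
    (hW : ∀ x : X, (∀ w ∈ Wfam x, IsOpen w ∧ x ∈ w) ∧ #(Wfam x) ≤ κ ∧
      (⋂ w ∈ Wfam x, closure w) = {x})
    {B : Set X} (hB : #B ≤ κ) : #(closure B) ≤ 2 ^ κ := by
  have hch : ∀ x : closure B, ∃ Bx ⊆ B, #Bx ≤ κ ∧ (x : X) ∈ closure Bx :=
    fun x => ht B x x.2
  choose Bm hBm1 hBm2 hBm3 using hch
  set Φ : closure B → Set (Set X) := fun x => (fun w => Bm x ∩ w) '' Wfam x with hΦ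
  have hinj : Function.Injective Φ := by
    intro x y hxy
    have hx : (x : X) ∈ ⋂ w ∈ Wfam (y : X), closure w := by
      refine mem_iInter₂.2 fun w hw => ?_
      have hmem : Bm y ∩ w ∈ Φ y := ⟨w, hw, rfl⟩
      rw [← hxy] at hmem
      obtain ⟨w', hw', heq⟩ := hmem
      have hxw' : (x : X) ∈ closure (Bm x ∩ w') := by
        have hopen := ((hW (x : X)).1 w' hw').1
        have hxin := ((hW (x : X)).1 w' hw').2
        have := hopen.inter_closure (t := Bm x) ⟨hxin, hBm3 x⟩
        exact closure_mono (by rw [inter_comm]) this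
      have heq' : Bm x ∩ w' = Bm y ∩ w := heq
      rw [heq'] at hxw'
      exact closure_mono inter_subset_right hxw'
    rw [(hW (y : X)).2.2] at hx
    exact Subtype.ext hx
  -- codomain bound
  have hcod : ∀ x : closure B, Φ x ⊆ 𝒫 B ∧ #(Φ x) ≤ κ := by
    intro x
    constructor
    · rintro w ⟨w', _, rfl⟩
      exact inter_subset_left.trans (hBm1 x)
    · exact mk_image_le.trans ((hW (x : X)).2.1)
  let f : closure B → { t : Set (Set X) // t ⊆ 𝒫 B ∧ #t ≤ κ } :=
    fun x => ⟨Φ x, hcod x⟩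
  have hfinj : Function.Injective f := fun a b h => hinj (congrArg Subtype.val h)
  calc #(closure B) ≤ #{ t : Set (Set X) // t ⊆ 𝒫 B ∧ #t ≤ κ } := mk_le_of_injective hfinj
    _ ≤ max #(𝒫 B) ℵ₀ ^ κ := mk_bounded_subset_le _ _
    _ ≤ 2 ^ κ := by
        apply aux_pow_le hκ
        rw [mk_powerset]
        exact power_le_power_left (by norm_num) hB

noncomputable def auxChain {X : Type u} (next : Set X → Set X) (o : Ordinal.{u})
    (i : o.ToType) : Set X :=
  next (⋃ j : Iio i, auxChain next o j)
termination_by i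
decreasing_by exact j.2

lemma auxChain_eq {X : Type u} (next : Set X → Set X) (o : Ordinal.{u}) (i : o.ToType) :
    auxChain next o i = next (⋃ j : Iio i, auxChain next o j) := by
  rw [auxChain]


theorem statement6 {X : Type u} [TopologicalSpace X] [T2Space X] {κ : Cardinal.{u}}
    (hκ : ℵ₀ ≤ κ)
    (hψ : ∀ x : X, ∃ U : Set (Set X), (∀ u ∈ U, IsOpen u) ∧ #U ≤ κ ∧ ⋂₀ U = {x})
    (ht : TightnessLE X κ)
    (hL : LindelofLE (Set.univ : Set X) κ) :
    #X ≤ 2 ^ κ := by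
  classical
  have h2κ : ℵ₀ ≤ 2 ^ κ := hκ.trans (cantor κ).le
  rcases isEmpty_or_nonempty X with hX | hX
  · rw [mk_eq_zero X]; exact Cardinal.zero_le _
  choose Wfam hWo hWk hWc using aux_psic hκ hψ hL
  have hW : ∀ x : X, (∀ w ∈ Wfam x, IsOpen w ∧ x ∈ w) ∧ #(Wfam x) ≤ κ ∧
      (⋂ w ∈ Wfam x, closure w) = {x} := fun x => ⟨hWo x, hWk x, hWc x⟩
  -- choice of points avoiding small families
  let pick : Set (Set X) → X := fun 𝒰 =>
    if h : ((⋃₀ 𝒰)ᶜ).Nonempty then h.choose else Classical.arbitrary X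
  have hpick : ∀ 𝒰 : Set (Set X), ((⋃₀ 𝒰)ᶜ).Nonempty → pick 𝒰 ∉ ⋃₀ 𝒰 := by
    intro 𝒰 h
    have : pick 𝒰 = h.choose := dif_pos h
    rw [this]; exact h.choose_spec
  -- the one-step closure operator
  set next : Set X → Set X := fun A =>
    (A ∪ ⋃ B : {B : Set X // B ⊆ A ∧ #B ≤ κ}, closure (B : Set X)) ∪
      pick '' {𝒰 : Set (Set X) | 𝒰 ⊆ (⋃ x ∈ A, Wfam x) ∧ #𝒰 ≤ κ} with hnextdef
  have hnext1 : ∀ A : Set X, A ⊆ next A := fun A =>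
    (subset_union_left).trans subset_union_left
  have hnext2 : ∀ A B : Set X, B ⊆ A → #B ≤ κ → closure B ⊆ next A := by
    intro A B h1 h2
    exact (subset_iUnion (fun B : {B : Set X // B ⊆ A ∧ #B ≤ κ} => closure (B : Set X))
      ⟨B, h1, h2⟩).trans (subset_union_right.trans subset_union_left)
  have hnext3 : ∀ (A : Set X) (𝒰 : Set (Set X)), 𝒰 ⊆ (⋃ x ∈ A, Wfam x) → #𝒰 ≤ κ →
      pick 𝒰 ∈ next A := by
    intro A 𝒰 h1 h2
    exact subset_union_right (mem_image_of_mem pick ⟨h1, h2⟩)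
  have hnextcard : ∀ A : Set X, #A ≤ 2 ^ κ → #(next A) ≤ 2 ^ κ := by
    intro A hA
    have hsub : #{B : Set X // B ⊆ A ∧ #B ≤ κ} ≤ 2 ^ κ :=
      (mk_bounded_subset_le A κ).trans (aux_pow_le hκ hA)
    have hmid : #(⋃ B : {B : Set X // B ⊆ A ∧ #B ≤ κ}, closure (B : Set X)) ≤ 2 ^ κ := by
      haveI : Nonempty {B : Set X // B ⊆ A ∧ #B ≤ κ} :=
        ⟨∅, empty_subset _, by simp⟩
      calc #(⋃ B : {B : Set X // B ⊆ A ∧ #B ≤ κ}, closure (B : Set X))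
          ≤ #{B : Set X // B ⊆ A ∧ #B ≤ κ} *
            ⨆ B : {B : Set X // B ⊆ A ∧ #B ≤ κ}, #(closure (B : Set X)) := mk_iUnion_le _
        _ ≤ (2 ^ κ) * (2 ^ κ) :=
            mul_le_mul' hsub (ciSup_le' fun B => aux_closure_card hκ ht Wfam hW B.2.2)
        _ = 2 ^ κ := mul_eq_self h2κ
    have hS : #(⋃ x ∈ A, Wfam x) ≤ 2 ^ κ := by
      rcases isEmpty_or_nonempty A with h | h
      · have hA0 : A = ∅ := isEmpty_coe_sort.1 h
        rw [hA0]; simp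
      · calc #(⋃ x ∈ A, Wfam x) ≤ #A * ⨆ x : A, #(Wfam (x : X)) := mk_biUnion_le _ _
          _ ≤ (2 ^ κ) * (2 ^ κ) :=
              mul_le_mul' hA (ciSup_le' fun x => (hWk (x : X)).trans (cantor κ).le)
          _ = 2 ^ κ := mul_eq_self h2κ
    have himg : #(pick '' {𝒰 : Set (Set X) | 𝒰 ⊆ (⋃ x ∈ A, Wfam x) ∧ #𝒰 ≤ κ}) ≤ 2 ^ κ := by
      refine mk_image_le.trans ?_
      refine le_trans ?_ (aux_pow_le hκ hS)
      exact mk_bounded_subset_le _ κ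
    calc #(next A) ≤ #((A ∪ ⋃ B : {B : Set X // B ⊆ A ∧ #B ≤ κ}, closure (B : Set X)) :
          Set X) + #(pick '' {𝒰 : Set (Set X) | 𝒰 ⊆ (⋃ x ∈ A, Wfam x) ∧ #𝒰 ≤ κ}) :=
            mk_union_le _ _
      _ ≤ (#A + #(⋃ B : {B : Set X // B ⊆ A ∧ #B ≤ κ}, closure (B : Set X))) +
            #(pick '' {𝒰 : Set (Set X) | 𝒰 ⊆ (⋃ x ∈ A, Wfam x) ∧ #𝒰 ≤ κ}) :=
            add_le_add_left (mk_union_le _ _) _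
      _ ≤ ((2 ^ κ) + (2 ^ κ)) + (2 ^ κ) :=
            add_le_add (add_le_add hA hmid) himg
      _ = 2 ^ κ := by rw [add_eq_self h2κ, add_eq_self h2κ]
  -- the transfinite chain
  set o : Ordinal.{u} := (Order.succ κ).ord with ho
  haveI hOne : Nonempty o.ToType := by
    refine Ordinal.nonempty_toType_iff.2 ?_
    rw [ho, Ne, Cardinal.ord_eq_zero]
    exact ((Cardinal.zero_le κ).trans_lt (Order.lt_succ κ)).ne'
  set chain : o.ToType → Set X := auxChain next o with hchain
  have h_eq : ∀ i, chain i = next (⋃ j : Iio i, chain (j : o.ToType)) := fun i =>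
    auxChain_eq next o i
  have hIio : ∀ i : o.ToType, #(Iio i) ≤ κ := by
    intro i
    have := mk_Iio_toType_ord_lt (c := Order.succ κ) i
    exact Order.lt_succ_iff.1 this
  have hchain_card : ∀ i : o.ToType, #(chain i) ≤ 2 ^ κ := by
    intro i
    induction i using WellFoundedLT.induction with
    | _ i IH =>
      rw [h_eq]
      apply hnextcard
      rcases isEmpty_or_nonempty (Iio i) with h | h
      · rw [iUnion_of_empty]; simp
      · calc #(⋃ j : Iio i, chain (j : o.ToType)) ≤
            #(Iio i) * ⨆ j : Iio i, #(chain (j : o.ToType)) := mk_iUnion_le _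
          _ ≤ (2 ^ κ) * (2 ^ κ) := mul_le_mul' ((hIio i).trans (cantor κ).le)
              (ciSup_le' fun j => IH j j.2)
          _ = 2 ^ κ := mul_eq_self h2κ
  set G : Set X := ⋃ i : o.ToType, chain i with hG
  -- bounding small subsets of the chain
  have hbdd : ∀ S : Set o.ToType, #S ≤ κ → ∃ i : o.ToType, ∀ j ∈ S, j < i := by
    intro S hS
    have hcof : Order.cof o.ToType = Order.succ κ := by
      rw [Ordinal.cof_toType, ho]
      exact (Cardinal.isRegular_succ hκ).cof_ord
    by_contra hcon
    have hc : IsCofinal S := by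
      by_contra h
      exact hcon (not_isCofinal_iff.1 h)
    have := Order.cof_le hc
    rw [hcof] at this
    exact absurd (hS.trans_lt (Order.lt_succ κ)) this.not_gt
  have hGsub : ∀ B : Set X, B ⊆ G → #B ≤ κ → ∃ i : o.ToType,
      B ⊆ ⋃ j : Iio i, chain (j : o.ToType) := by
    intro B hBG hBk
    have hmem : ∀ b : B, ∃ i : o.ToType, (b : X) ∈ chain i := fun b =>
      mem_iUnion.1 (hBG b.2)
    choose f hf using hmem
    obtain ⟨i, hi⟩ := hbdd (range f) (mk_range_le.trans hBk)
    refine ⟨i, fun b hb => ?_⟩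
    have : (⟨b, hb⟩ : B).1 ∈ chain (f ⟨b, hb⟩) := hf ⟨b, hb⟩
    exact mem_iUnion.2 ⟨⟨f ⟨b, hb⟩, hi _ (mem_range_self _)⟩, this⟩
  have hGclosed : IsClosed G := by
    apply isClosed_of_closure_subset
    intro x hx
    obtain ⟨B, hBG, hBk, hxB⟩ := ht G x hx
    obtain ⟨i, hBi⟩ := hGsub B hBG hBk
    have : closure B ⊆ chain i := by
      rw [h_eq]
      exact hnext2 _ B hBi hBk
    exact mem_iUnion.2 ⟨i, this hxB⟩
  have hGcard : #G ≤ 2 ^ κ := by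
    calc #G ≤ #o.ToType * ⨆ i : o.ToType, #(chain i) := mk_iUnion_le _
      _ ≤ (2 ^ κ) * (2 ^ κ) := by
          apply mul_le_mul'
          · have : #o.ToType = Order.succ κ := by rw [mk_toType]; exact card_ord _
            rw [this]
            exact Order.succ_le_of_lt (cantor κ)
          · exact ciSup_le' hchain_card
      _ = 2 ^ κ := mul_eq_self h2κ
  -- G is all of X
  have hGuniv : G = (Set.univ : Set X) := by
    by_contra hne
    obtain ⟨x, hx⟩ := (ne_univ_iff_exists_notMem G).1 hne
    have hsep : ∀ y ∈ G, ∃ w ∈ Wfam y, x ∉ closure w := by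
      intro y hy
      by_contra hcon
      push_neg at hcon
      have hxy : x ∈ ⋂ w ∈ Wfam y, closure w := mem_iInter₂.2 hcon
      rw [hWc y] at hxy
      rw [hxy] at hx
      exact hx hy
    set T : Set (Set X) := {w | ∃ y ∈ G, w ∈ Wfam y ∧ x ∉ closure w} with hT
    obtain ⟨V, hVsub, hVk, hVcov⟩ := hL (insert Gᶜ T)
      (by
        rintro u (rfl | ⟨y, _, hw, _⟩)
        · exact hGclosed.isOpen_compl
        · exact (hWo y u hw).1)
      (by
        intro z _
        by_cases hz : z ∈ G
        · obtain ⟨w, hw, hxw⟩ := hsep z hz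
          exact ⟨w, Or.inr ⟨z, hz, hw, hxw⟩, (hWo z w hw).2⟩
        · exact ⟨Gᶜ, Or.inl rfl, hz⟩)
    set 𝒲 : Set (Set X) := V ∩ T with h𝒲
    have h𝒲k : #𝒲 ≤ κ := (mk_le_mk_of_subset inter_subset_left).trans hVk
    have h𝒲cov : G ⊆ ⋃₀ 𝒲 := by
      intro z hz
      obtain ⟨v, hv, hzv⟩ := hVcov (mem_univ z)
      rcases hVsub hv with rfl | hvT
      · exact absurd hz hzv
      · exact ⟨v, ⟨hv, hvT⟩, hzv⟩
    -- 𝒲 appears at some stage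
    have hyw : ∀ w : 𝒲, ∃ y, y ∈ G ∧ (w : Set X) ∈ Wfam y := by
      rintro ⟨w, _, y, hy, hw, _⟩
      exact ⟨y, hy, hw⟩
    choose yw hyw1 hyw2 using hyw
    have hyi : ∀ w : 𝒲, ∃ i : o.ToType, yw w ∈ chain i := fun w =>
      mem_iUnion.1 (hyw1 w)
    choose g hg using hyi
    obtain ⟨i, hi⟩ := hbdd (range g) (mk_range_le.trans h𝒲k)
    have h𝒲sub : 𝒲 ⊆ ⋃ z ∈ (⋃ j : Iio i, chain (j : o.ToType)), Wfam z := by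
      intro w hw
      have hyin : yw ⟨w, hw⟩ ∈ ⋃ j : Iio i, chain (j : o.ToType) :=
        mem_iUnion.2 ⟨⟨g ⟨w, hw⟩, hi _ (mem_range_self _)⟩, hg ⟨w, hw⟩⟩
      exact mem_biUnion hyin (hyw2 ⟨w, hw⟩)
    have hpickmem : pick 𝒲 ∈ G := by
      have := hnext3 _ 𝒲 h𝒲sub h𝒲k
      rw [← h_eq] at this
      exact mem_iUnion.2 ⟨i, this⟩
    have hxnot : x ∈ (⋃₀ 𝒲)ᶜ := by
      rintro ⟨w, hw, hxw⟩
      obtain ⟨y, hy, hwf, hxcl⟩ := hw.2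
      exact hxcl (subset_closure hxw)
    exact hpick 𝒲 ⟨x, hxnot⟩ (h𝒲cov hpickmem)
  have hfin := hGcard
  rw [hGuniv] at hfin
  simpa using hfin
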